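/- Suppose f belongs to the class of structured problems with lower convex approximation l_f(y; x) and functions L(y) > 0, δ(y) ≥ 0, and let {ψ_k} satisfy Property 1 with z_k := argmin_{x∈Q} ψ_k(x). Suppose the relation (R_k): S_k f(x̂_k) ≤ min_{x∈Q} ψ_k(x) + C_k holds for some k ≥ 0. If x_{k+1} = (S_k x̂_k + λ_{k+1} z_k)/S_{k+1} and σ β_k S_{k+1}/λ_{k+1}² ≥ L(x_{k+1}), then (R_{k+1}) holds with x̂_{k+1} := (S_k x̂_k + λ_{k+1} z_{k+1})/S_{k+1} and C_{k+1} := C_k + S_{k+1} δ(x_{k+1}). -/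

import Mathlib

/-- Theorem 5.1 (b'): for structured problems, if `(R_k)` holds,
`x_{k+1} = (S_k x̂_k + λ_{k+1} z_k)/S_{k+1}` and `σ β_k S_{k+1}/λ_{k+1}² ≥ L(x_{k+1})`,
then `(R_{k+1})` holds with `x̂_{k+1} := (S_k x̂_k + λ_{k+1} z_{k+1})/S_{k+1}` and
`C_{k+1} := C_k + S_{k+1} δ(x_{k+1})`.
(Indices shifted: `ψ (k+1)`, `z (k+1)`, `β (k+1)` are the paper's `ψ_k`, `z_k`, `β_k`.) -/
theorem estrel_structured_step_alt
    {E : Type*} [NormedAddCommGroup E] [NormedSpace ℝ E] [FiniteDimensional ℝ E]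
    (Q : Set E) (hQne : Q.Nonempty) (hQcl : IsClosed Q) (hQcv : Convex ℝ Q)
    (f : E → ℝ) (hf_cv : ConvexOn ℝ Q f) (hf_lsc : LowerSemicontinuousOn f Q)
    (σ : ℝ) (hσ : 0 < σ)
    (d : E → ℝ) (d' : E → E →L[ℝ] ℝ)
    (hd_sc : StrongConvexOn Q σ d)
    (hd_diff : ∀ y ∈ Q, HasFDerivWithinAt d (d' y) Q y)
    (x₀ : E) (hx₀Q : x₀ ∈ Q) (hdx₀ : d x₀ = 0) (hd_nonneg : ∀ u ∈ Q, 0 ≤ d u)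
    (hBreg : ∀ w ∈ Q, ∀ u ∈ Q, σ / 2 * ‖u - w‖ ^ 2 ≤ d u - d w - d' w (u - w))
    (lam : ℕ → ℝ) (hlam : ∀ k, 0 < lam k)
    (β : ℕ → ℝ) (hβ0 : 0 < β 0) (hβmono : ∀ k, β k ≤ β (k + 1))
    (x : ℕ → E) (hxQ : ∀ k, x k ∈ Q)
    (ψ : ℕ → E → ℝ) (z : ℕ → E)
    (hzQ : ∀ n, z n ∈ Q) (hzmin : ∀ n, ∀ u ∈ Q, ψ n (z n) ≤ ψ n u)
    (lf : E → E → ℝ) (L : E → ℝ) (δ : E → ℝ)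
    (hL : ∀ y ∈ Q, 0 < L y) (hδ : ∀ y ∈ Q, 0 ≤ δ y)
    (hlf_cv : ∀ y ∈ Q, ConvexOn ℝ Q (lf y))
    (hlf_lsc : ∀ y ∈ Q, LowerSemicontinuousOn (lf y) Q)
    (hlf_lb : ∀ y ∈ Q, ∀ u ∈ Q, lf y u ≤ f u)
    (hlf_ub : ∀ y ∈ Q, ∀ u ∈ Q, f u ≤ lf y u + L y / 2 * ‖u - y‖ ^ 2 + δ y)
    (hP1a : ψ 0 (z 0) = 0) (hP1b : z 0 = x₀)
    (hP2 : ∀ n : ℕ, ∀ u ∈ Q,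
      ψ n (z n) + lam n * lf (x n) u + β (n + 1) * d u
        - β n * (d (z n) + d' (z n) (u - z n)) ≤ ψ (n + 1) u)
    (hP3 : ∀ k : ℕ, ∀ u ∈ Q,
      ψ (k + 1) (z (k + 1)) ≤ (∑ i ∈ Finset.range (k + 1), lam i * lf (x i) u)
        + β (k + 1) * (d (z (k + 1)) + d' (z (k + 1)) (u - z (k + 1))))
    (k : ℕ) (xhat : E) (hxhatQ : xhat ∈ Q) (C : ℝ)
    (hRk : (∑ i ∈ Finset.range (k + 1), lam i) * f xhat ≤ ψ (k + 1) (z (k + 1)) + C)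
    (hx : x (k + 1) = (∑ i ∈ Finset.range (k + 2), lam i)⁻¹ •
        ((∑ i ∈ Finset.range (k + 1), lam i) • xhat + lam (k + 1) • z (k + 1)))
    (hcond : L (x (k + 1)) ≤ σ * β (k + 1) * (∑ i ∈ Finset.range (k + 2), lam i) / (lam (k + 1)) ^ 2) :
    (∑ i ∈ Finset.range (k + 2), lam i) * f ((∑ i ∈ Finset.range (k + 2), lam i)⁻¹ •
        ((∑ i ∈ Finset.range (k + 1), lam i) • xhat + lam (k + 1) • z (k + 2)))
      ≤ ψ (k + 2) (z (k + 2)) + (C + (∑ i ∈ Finset.range (k + 2), lam i) * δ (x (k + 1))) := by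

  have hSkpos : 0 < ∑ i ∈ Finset.range (k + 1), lam i :=
    Finset.sum_pos (fun i _ => hlam i) (by simp)
  have hSk1pos : 0 < ∑ i ∈ Finset.range (k + 2), lam i :=
    Finset.sum_pos (fun i _ => hlam i) (by simp)
  set Sk := ∑ i ∈ Finset.range (k + 1), lam i with hSkdef
  set Sk1 := ∑ i ∈ Finset.range (k + 2), lam i with hSk1def
  have hsum : Sk1 = Sk + lam (k + 1) := by
    rw [hSk1def, hSkdef, Finset.sum_range_succ]
  set lam1 := lam (k + 1) with hlam1def
  have hlam1pos : 0 < lam1 := hlam (k + 1)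
  set a := Sk / Sk1 with hadef
  set b := lam1 / Sk1 with hbdef
  have ha : 0 ≤ a := le_of_lt (div_pos hSkpos hSk1pos)
  have hb : 0 ≤ b := le_of_lt (div_pos hlam1pos hSk1pos)
  have hab : a + b = 1 := by
    rw [hadef, hbdef, ← add_div, hsum]
    field_simp
  have hβpos : ∀ n, 0 < β n := by
    intro n
    induction n with
    | zero => exact hβ0
    | succ m ih => exact lt_of_lt_of_le ih (hβmono m)
  have hcomb : ∀ w : E, Sk1⁻¹ • (Sk • xhat + lam1 • w) = a • xhat + b • w := by
    intro w
    rw [hadef, hbdef, smul_add, smul_smul, smul_smul, div_eq_inv_mul, div_eq_inv_mul]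
  have hxk1 : x (k + 1) = a • xhat + b • z (k + 1) := by rw [hx]; exact hcomb _
  set xh := a • xhat + b • z (k + 2) with hxhdef
  have hxhQ : xh ∈ Q := hQcv hxhatQ (hzQ (k + 2)) ha hb hab
  have hdiff : xh - x (k + 1) = b • (z (k + 2) - z (k + 1)) := by
    rw [hxk1, hxhdef]; module
  have hnorm : ‖xh - x (k + 1)‖ ^ 2 = b ^ 2 * ‖z (k + 2) - z (k + 1)‖ ^ 2 := by
    rw [hdiff, norm_smul, mul_pow, Real.norm_eq_abs, sq_abs]
  set N := ‖z (k + 2) - z (k + 1)‖ ^ 2 with hNdef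
  have hN : 0 ≤ N := sq_nonneg _
  -- upper bound on f at xh
  have h1 : f xh ≤ lf (x (k + 1)) xh + L (x (k + 1)) / 2 * (b ^ 2 * N) + δ (x (k + 1)) := by
    have := hlf_ub (x (k + 1)) (hxQ (k + 1)) xh hxhQ
    rwa [hnorm] at this
  have h2 : lf (x (k + 1)) xh ≤ a * lf (x (k + 1)) xhat + b * lf (x (k + 1)) (z (k + 2)) :=
    (hlf_cv (x (k + 1)) (hxQ (k + 1))).2 hxhatQ (hzQ (k + 2)) ha hb hab
  have h3 : lf (x (k + 1)) xhat ≤ f xhat := hlf_lb (x (k + 1)) (hxQ (k + 1)) xhat hxhatQ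
  have h4 := hP2 (k + 1) (z (k + 2)) (hzQ (k + 2))
  have h5 := hBreg (z (k + 1)) (hzQ (k + 1)) (z (k + 2)) (hzQ (k + 2))
  have hβ1 := hβpos (k + 1)
  have hβm := hβmono (k + 1)
  have hdz2 := hd_nonneg (z (k + 2)) (hzQ (k + 2))
  -- scalar relations
  have haS : Sk1 * a = Sk := by rw [hadef]; field_simp
  have hbS : Sk1 * b = lam1 := by rw [hbdef]; field_simp
  -- curvature bound: Sk1 * (L/2 * b^2 * N) ≤ σ * β(k+1)/2 * N
  have hLle : L (x (k + 1)) * lam1 ^ 2 ≤ σ * β (k + 1) * Sk1 := by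
    have h := mul_le_mul_of_nonneg_right hcond (le_of_lt (pow_pos hlam1pos 2))
    rwa [div_mul_cancel₀ _ (ne_of_gt (pow_pos hlam1pos 2))] at h
  have hcurv : Sk1 * (L (x (k + 1)) / 2 * (b ^ 2 * N)) ≤ σ * β (k + 1) / 2 * N := by
    have hkey : Sk1 * (L (x (k + 1)) / 2 * (b ^ 2 * N))
        = L (x (k + 1)) * lam1 ^ 2 * N / (2 * Sk1) := by
      rw [hbdef]; field_simp
    rw [hkey, div_le_iff₀ (by positivity)]
    calc L (x (k + 1)) * lam1 ^ 2 * N ≤ σ * β (k + 1) * Sk1 * N :=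
          mul_le_mul_of_nonneg_right hLle hN
      _ = σ * β (k + 1) / 2 * N * (2 * Sk1) := by ring
  -- multiply h1, h2 by Sk1 and combine
  have m1 := mul_le_mul_of_nonneg_left h1 (le_of_lt hSk1pos)
  have m2 := mul_le_mul_of_nonneg_left h2 (le_of_lt hSk1pos)
  rw [mul_add, mul_add] at m1
  rw [mul_add, ← mul_assoc, ← mul_assoc, haS, hbS] at m2
  have hmul1 : Sk1 * f xh ≤ Sk * lf (x (k + 1)) xhat + lam1 * lf (x (k + 1)) (z (k + 2))
      + Sk1 * (L (x (k + 1)) / 2 * (b ^ 2 * N)) + Sk1 * δ (x (k + 1)) := by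
    linarith [m1, m2]
  have hSkf : Sk * lf (x (k + 1)) xhat ≤ ψ (k + 1) (z (k + 1)) + C := by
    calc Sk * lf (x (k + 1)) xhat ≤ Sk * f xhat :=
          mul_le_mul_of_nonneg_left h3 (le_of_lt hSkpos)
      _ ≤ ψ (k + 1) (z (k + 1)) + C := hRk
  rw [← hNdef] at h5
  have hbreg' : β (k + 1) * (d (z (k + 1)) + (d' (z (k + 1))) (z (k + 2) - z (k + 1)))
      ≤ β (k + 1) * d (z (k + 2)) - σ * β (k + 1) / 2 * N := by
    have hp := mul_le_mul_of_nonneg_left h5 (le_of_lt hβ1)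
    have e1 : β (k + 1) * (σ / 2 * N) = σ * β (k + 1) / 2 * N := by ring
    have e2 : β (k + 1) * (d (z (k + 2)) - d (z (k + 1))
        - (d' (z (k + 1))) (z (k + 2) - z (k + 1)))
        = β (k + 1) * d (z (k + 2)) - β (k + 1) * d (z (k + 1))
          - β (k + 1) * (d' (z (k + 1))) (z (k + 2) - z (k + 1)) := by ring
    have e3 : β (k + 1) * (d (z (k + 1)) + (d' (z (k + 1))) (z (k + 2) - z (k + 1)))
        = β (k + 1) * d (z (k + 1))
          + β (k + 1) * (d' (z (k + 1))) (z (k + 2) - z (k + 1)) := by ring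
    rw [e3]; rw [e1, e2] at hp; linarith
  have hfinal : lam1 * lf (x (k + 1)) (z (k + 2)) ≤
      ψ (k + 2) (z (k + 2)) - ψ (k + 1) (z (k + 1)) - σ * β (k + 1) / 2 * N
      + (β (k + 1) - β (k + 2)) * d (z (k + 2)) := by
    have hexp : (β (k + 1) - β (k + 2)) * d (z (k + 2))
        = β (k + 1) * d (z (k + 2)) - β (k + 2) * d (z (k + 2)) := by ring
    rw [hexp]
    linarith [h4, hbreg']
  have hβd : (β (k + 1) - β (k + 2)) * d (z (k + 2)) ≤ 0 :=
    mul_nonpos_of_nonpos_of_nonneg (by linarith) hdz2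
  have hgoal : Sk1 * f xh ≤ ψ (k + 2) (z (k + 2)) + (C + Sk1 * δ (x (k + 1))) := by
    linarith [hmul1, hSkf, hfinal, hβd, hcurv]
  calc Sk1 * f (Sk1⁻¹ • (Sk • xhat + lam1 • z (k + 2)))
      = Sk1 * f xh := by rw [hcomb]
    _ ≤ _ := hgoal
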